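/- Let f: ℝⁿ → ℝ be continuously differentiable and let {x^k} be generated by x^{k+1} = x^k + t_k d^k with t_k ≥ 0. Suppose that inf_k f(x^k) > −∞, that f satisfies the L-descent condition for some L > 0, that {d^k} is gradient associated with {x^k} and satisfies ⟨∇f(x^k), d^k⟩ ≤ −κ‖d^k‖² for all k with some κ > 0, that ∑_{k=1}^∞ t_k = ∞, that there exist δ > 0 and N ∈ ℕ with t_k ≤ (2κ − δ)/L for all k ≥ N, and that {t_k} is bounded away from 0 (there is t̄ > 0 with t_k ≥ t̄ for all k). Then ∇f(x^k) → 0 as k → ∞. -/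

import Mathlib

open Filter

/-- Corollary 3.4 (last part): under the same assumptions, if additionally the stepsizes
are bounded away from `0`, then `∇f(x^k) → 0` as `k → ∞`. -/
theorem stmt6 {n : ℕ} (f : EuclideanSpace ℝ (Fin n) → ℝ) (hf : ContDiff ℝ 1 f)
    (x d : ℕ → EuclideanSpace ℝ (Fin n)) (t : ℕ → ℝ)
    (ht : ∀ k, 0 ≤ t k)
    (hstep : ∀ k, x (k + 1) = x k + t k • d k)
    (hinf : BddBelow (Set.range fun k => f (x k)))
    (L : ℝ) (hL : 0 < L)
    (hdesc : ∀ a b : EuclideanSpace ℝ (Fin n),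
      f b ≤ f a + (inner ℝ (gradient f a) (b - a) : ℝ) + L / 2 * ‖b - a‖ ^ 2)
    (hga : ∀ φ : ℕ → ℕ, StrictMono φ → Tendsto (d ∘ φ) atTop (nhds 0) →
      Tendsto (fun k => gradient f (x (φ k))) atTop (nhds 0))
    (κ : ℝ) (hκ : 0 < κ)
    (hsd : ∀ k, (inner ℝ (gradient f (x k)) (d k) : ℝ) ≤ -κ * ‖d k‖ ^ 2)
    (hdiv : Tendsto (fun N => ∑ k ∈ Finset.range N, t k) atTop atTop)
    (δ : ℝ) (hδ : 0 < δ) (N : ℕ) (htk : ∀ k ≥ N, t k ≤ (2 * κ - δ) / L)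
    (tlow : ℝ) (htlow : 0 < tlow) (hlow : ∀ k, tlow ≤ t k) :
    Tendsto (fun k => gradient f (x k)) atTop (nhds 0) := by
  -- constant per-step decrease coefficient
  set c : ℝ := tlow * (δ / 2) with hc
  have hcpos : 0 < c := by positivity
  -- per-step decrease for k ≥ N
  have key : ∀ k ≥ N, c * ‖d k‖ ^ 2 ≤ f (x k) - f (x (k + 1)) := by
    intro k hk
    have hdk := hdesc (x k) (x (k + 1))
    rw [hstep k] at hdk
    have hsub : x k + t k • d k - x k = t k • d k := by abel
    rw [hsub, real_inner_smul_right, norm_smul] at hdk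
    have h1 : t k * (inner ℝ (gradient f (x k)) (d k) : ℝ) ≤ t k * (-κ * ‖d k‖ ^ 2) :=
      mul_le_mul_of_nonneg_left (hsd k) (ht k)
    have hnorm : (‖t k‖ * ‖d k‖) ^ 2 = t k ^ 2 * ‖d k‖ ^ 2 := by
      rw [mul_pow, Real.norm_eq_abs, sq_abs]
    rw [hnorm] at hdk
    have h2 : f (x (k + 1)) ≤ f (x k) - t k * (κ - L / 2 * t k) * ‖d k‖ ^ 2 := by
      rw [← hstep k] at hdk
      nlinarith [hdk, h1]
    have h3 : δ / 2 ≤ κ - L / 2 * t k := by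
      have := htk k hk
      have : L * t k ≤ 2 * κ - δ := by
        calc L * t k ≤ L * ((2 * κ - δ) / L) := mul_le_mul_of_nonneg_left (htk k hk) hL.le
        _ = 2 * κ - δ := by field_simp
      linarith
    have h4 : c ≤ t k * (κ - L / 2 * t k) := by
      have := hlow k
      have hpos : (0:ℝ) < δ / 2 := by positivity
      calc c = tlow * (δ / 2) := hc
      _ ≤ t k * (κ - L / 2 * t k) :=
        mul_le_mul (hlow k) h3 hpos.le ((htlow.trans_le (hlow k)).le)
    nlinarith [sq_nonneg ‖d k‖, h2, h4]
  -- lower bound on f along the sequence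
  obtain ⟨B, hB⟩ := hinf
  have hBle : ∀ k, B ≤ f (x k) := fun k => hB ⟨k, rfl⟩
  -- summability of shifted terms
  have hsum : Summable (fun k => c * ‖d (N + k)‖ ^ 2) := by
    apply summable_of_sum_range_le (c := f (x N) - B)
    · intro k; positivity
    · intro M
      have tel : ∑ k ∈ Finset.range M, (f (x (N + k)) - f (x (N + (k + 1))))
          = f (x (N + 0)) - f (x (N + M)) := by
        exact Finset.sum_range_sub' (fun k => f (x (N + k))) M
      have hle : ∑ k ∈ Finset.range M, c * ‖d (N + k)‖ ^ 2
          ≤ ∑ k ∈ Finset.range M, (f (x (N + k)) - f (x (N + (k + 1)))) := by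
        apply Finset.sum_le_sum
        intro i _
        have := key (N + i) (Nat.le_add_right N i)
        simpa [Nat.add_assoc] using this
      calc ∑ k ∈ Finset.range M, c * ‖d (N + k)‖ ^ 2
          ≤ f (x (N + 0)) - f (x (N + M)) := by rw [← tel]; exact hle
        _ ≤ f (x N) - B := by
            have := hBle (N + M); simp only [Nat.add_zero]; linarith
  -- hence the terms tend to 0
  have hterm : Tendsto (fun k => c * ‖d (N + k)‖ ^ 2) atTop (nhds 0) :=
    hsum.tendsto_atTop_zero
  have hterm' : Tendsto (fun k => c * ‖d k‖ ^ 2) atTop (nhds 0) := by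
    apply (tendsto_add_atTop_iff_nat N).mp
    simpa [Nat.add_comm] using hterm
  have hsq : Tendsto (fun k => ‖d k‖ ^ 2) atTop (nhds 0) := by
    have := hterm'.const_mul (c⁻¹)
    simpa [mul_comm, ← mul_assoc, inv_mul_cancel₀ hcpos.ne', mul_inv_cancel₀ hcpos.ne'] using this
  have hnorm0 : Tendsto (fun k => ‖d k‖) atTop (nhds 0) := by
    have hcont : Tendsto Real.sqrt (nhds 0) (nhds 0) := by
      simpa using (Real.continuous_sqrt.tendsto 0)
    have := hcont.comp hsq
    convert this using 2 with k
    simp [Function.comp, Real.sqrt_sq (norm_nonneg _)]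
  have hd0 : Tendsto d atTop (nhds 0) := tendsto_zero_iff_norm_tendsto_zero.2 hnorm0
  have := hga id strictMono_id (by simpa [Function.comp] using hd0)
  simpa using this
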